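/- arXiv:2603.13475 — 4 statements merged into one kernel-verified Lean document; each statement's English description precedes it below -/
import Mathlib

section
/- The function h(t) = (t² − 1 − 2t·ln t) / (2(t−1)²), extended by continuity at t = 1 with h(1) = 0, is monotonically increasing on (0, ∞). -/
open Classical in
/-- `h(t) = (t² − 1 − 2t·ln t)/(2(t−1)²)` for `t ≠ 1`, extended continuously by `h(1) = 0`. -/
noncomputable def h5 (t : ℝ) : ℝ :=
  if t = 1 then 0 else (t ^ 2 - 1 - 2 * t * Real.log t) / (2 * (t - 1) ^ 2)

lemma log_ge_one_sub_inv {t : ℝ} (ht : 0 < t) : 1 - 1 / t ≤ Real.log t := by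
  have h := Real.log_le_sub_one_of_pos (show (0:ℝ) < 1 / t by positivity)
  rw [Real.log_div one_ne_zero (ne_of_gt ht), Real.log_one] at h
  linarith

/-- `p t = (t+1) log t - 2(t-1)` is monotone on `(0,∞)`. -/
lemma p_mono : MonotoneOn (fun t : ℝ => (t + 1) * Real.log t - 2 * (t - 1)) (Set.Ioi 0) := by
  have hderiv : ∀ t : ℝ, t ∈ Set.Ioi (0:ℝ) →
      HasDerivAt (fun t : ℝ => (t + 1) * Real.log t - 2 * (t - 1))
        (Real.log t + (t + 1) / t - 2) t := by
    intro t ht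
    have ht0 : (0:ℝ) < t := ht
    have h1 : HasDerivAt (fun t : ℝ => (t + 1) * Real.log t)
        (1 * Real.log t + (t + 1) * t⁻¹) t :=
      (((hasDerivAt_id t).add_const 1)).mul (Real.hasDerivAt_log (ne_of_gt ht0))
    have h2 : HasDerivAt (fun t : ℝ => 2 * (t - 1)) 2 t := by
      simpa using ((hasDerivAt_id t).sub_const 1).const_mul 2
    have := h1.sub h2
    exact this.congr_deriv (by rw [one_mul, div_eq_mul_inv])
  apply monotoneOn_of_deriv_nonneg (convex_Ioi 0)
  · exact fun t ht => (hderiv t ht).continuousAt.continuousWithinAt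
  · rw [interior_Ioi]
    exact fun t ht => (hderiv t ht).differentiableAt.differentiableWithinAt
  · rw [interior_Ioi]
    intro t ht
    rw [(hderiv t ht).deriv]
    have ht0 : (0:ℝ) < t := ht
    have hlog := log_ge_one_sub_inv ht0
    have : (t + 1) / t = 1 + 1 / t := by field_simp
    rw [this]
    linarith

lemma p_nonneg {t : ℝ} (ht : 1 ≤ t) : 0 ≤ (t + 1) * Real.log t - 2 * (t - 1) := by
  have := p_mono (Set.mem_Ioi.2 one_pos) (Set.mem_Ioi.2 (lt_of_lt_of_le one_pos ht)) ht
  simpa using this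

lemma p_nonpos {t : ℝ} (ht0 : 0 < t) (ht : t ≤ 1) :
    (t + 1) * Real.log t - 2 * (t - 1) ≤ 0 := by
  have := p_mono (Set.mem_Ioi.2 ht0) (Set.mem_Ioi.2 one_pos) ht
  simpa using this

/-- `n t = t² - 1 - 2t log t` is monotone on `(0,∞)`. -/
lemma n_mono : MonotoneOn (fun t : ℝ => t ^ 2 - 1 - 2 * t * Real.log t) (Set.Ioi 0) := by
  have hderiv : ∀ t : ℝ, t ∈ Set.Ioi (0:ℝ) →
      HasDerivAt (fun t : ℝ => t ^ 2 - 1 - 2 * t * Real.log t)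
        (2 * t - (2 * Real.log t + 2)) t := by
    intro t ht
    have ht0 : (0:ℝ) < t := ht
    have h1 : HasDerivAt (fun t : ℝ => t ^ 2 - 1) (2 * t) t := by
      simpa using ((hasDerivAt_pow 2 t).sub_const 1)
    have h2 : HasDerivAt (fun t : ℝ => 2 * t * Real.log t)
        (2 * Real.log t + 2 * t * t⁻¹) t := by
      have := (((hasDerivAt_id t).const_mul 2)).mul (Real.hasDerivAt_log (ne_of_gt ht0))
      exact this.congr_deriv (by simp only [id, mul_one])
    have h2' : HasDerivAt (fun t : ℝ => 2 * t * Real.log t) (2 * Real.log t + 2) t := by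
      convert h2 using 1
      field_simp
    exact h1.sub h2'
  apply monotoneOn_of_deriv_nonneg (convex_Ioi 0)
  · exact fun t ht => (hderiv t ht).continuousAt.continuousWithinAt
  · rw [interior_Ioi]
    exact fun t ht => (hderiv t ht).differentiableAt.differentiableWithinAt
  · rw [interior_Ioi]
    intro t ht
    rw [(hderiv t ht).deriv]
    have hlog := Real.log_le_sub_one_of_pos (show (0:ℝ) < t from ht)
    linarith

lemma n_nonneg {t : ℝ} (ht : 1 ≤ t) : 0 ≤ t ^ 2 - 1 - 2 * t * Real.log t := by
  have := n_mono (Set.mem_Ioi.2 one_pos) (Set.mem_Ioi.2 (lt_of_lt_of_le one_pos ht)) ht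
  simpa using this

lemma n_nonpos {t : ℝ} (ht0 : 0 < t) (ht : t ≤ 1) : t ^ 2 - 1 - 2 * t * Real.log t ≤ 0 := by
  have := n_mono (Set.mem_Ioi.2 ht0) (Set.mem_Ioi.2 one_pos) ht
  simpa using this

lemma h5_nonneg {t : ℝ} (ht : 1 ≤ t) : 0 ≤ h5 t := by
  unfold h5
  rcases eq_or_lt_of_le ht with h | h
  · simp [← h]
  · rw [if_neg (ne_of_gt h)]
    apply div_nonneg (n_nonneg ht)
    have : t - 1 ≠ 0 := by linarith
    positivity

lemma h5_nonpos {t : ℝ} (ht0 : 0 < t) (ht : t ≤ 1) : h5 t ≤ 0 := by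
  unfold h5
  rcases eq_or_lt_of_le ht with h | h
  · simp [h]
  · rw [if_neg (ne_of_lt h)]
    apply div_nonpos_of_nonpos_of_nonneg (n_nonpos ht0 ht)
    have : t - 1 ≠ 0 := by linarith
    positivity

/-- derivative of h5 away from 1 -/
lemma h5_hasDerivAt {t : ℝ} (ht0 : 0 < t) (ht1 : t ≠ 1) :
    HasDerivAt h5 (((t + 1) * Real.log t - 2 * (t - 1)) / (t - 1) ^ 3) t := by
  have hF : HasDerivAt (fun t : ℝ => (t ^ 2 - 1 - 2 * t * Real.log t) / (2 * (t - 1) ^ 2))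
      (((t + 1) * Real.log t - 2 * (t - 1)) / (t - 1) ^ 3) t := by
    have hN : HasDerivAt (fun t : ℝ => t ^ 2 - 1 - 2 * t * Real.log t)
        (2 * t - (2 * Real.log t + 2)) t := by
      have h1 : HasDerivAt (fun t : ℝ => t ^ 2 - 1) (2 * t) t := by
        simpa using ((hasDerivAt_pow 2 t).sub_const 1)
      have h2 : HasDerivAt (fun t : ℝ => 2 * t * Real.log t)
          (2 * Real.log t + 2 * t * t⁻¹) t := by
        have := (((hasDerivAt_id t).const_mul 2)).mul (Real.hasDerivAt_log (ne_of_gt ht0))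
        exact this.congr_deriv (by simp only [id, mul_one])
      have h2' : HasDerivAt (fun t : ℝ => 2 * t * Real.log t) (2 * Real.log t + 2) t := by
        convert h2 using 1
        field_simp
      exact h1.sub h2'
    have hD : HasDerivAt (fun t : ℝ => 2 * (t - 1) ^ 2) (2 * (2 * (t - 1))) t := by
      simpa using (((hasDerivAt_id t).sub_const 1).pow 2).const_mul 2
    have hDne : 2 * (t - 1) ^ 2 ≠ 0 := by
      have : t - 1 ≠ 0 := sub_ne_zero.2 ht1
      positivity
    have := hN.div hD hDne
    have h1 : t - 1 ≠ 0 := sub_ne_zero.2 ht1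
    refine this.congr_deriv ?_
    rw [div_eq_div_iff (pow_ne_zero _ hDne) (pow_ne_zero _ h1)]
    ring
  apply hF.congr_of_eventuallyEq
  filter_upwards [eventually_ne_nhds ht1] with x hx
  simp [h5, if_neg hx]

lemma h5_mono_Ioo : MonotoneOn h5 (Set.Ioo (0:ℝ) 1) := by
  apply monotoneOn_of_deriv_nonneg (convex_Ioo 0 1)
  · intro t ht
    exact (h5_hasDerivAt ht.1 (ne_of_lt ht.2)).continuousAt.continuousWithinAt
  · rw [interior_Ioo]
    intro t ht
    exact (h5_hasDerivAt ht.1 (ne_of_lt ht.2)).differentiableAt.differentiableWithinAt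
  · rw [interior_Ioo]
    intro t ht
    rw [(h5_hasDerivAt ht.1 (ne_of_lt ht.2)).deriv]
    have h1 : t - 1 < 0 := by linarith [ht.2]
    refine div_nonneg_iff.2 (Or.inr ⟨p_nonpos ht.1 (le_of_lt ht.2), ?_⟩)
    nlinarith [sq_nonneg (t - 1)]
  
lemma h5_mono_Ioi : MonotoneOn h5 (Set.Ioi (1:ℝ)) := by
  apply monotoneOn_of_deriv_nonneg (convex_Ioi 1)
  · intro t ht
    have ht1 : (1:ℝ) < t := ht
    exact (h5_hasDerivAt (lt_trans one_pos ht1) (ne_of_gt ht1)).continuousAt.continuousWithinAt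
  · rw [interior_Ioi]
    intro t ht
    have ht1 : (1:ℝ) < t := ht
    exact (h5_hasDerivAt (lt_trans one_pos ht1) (ne_of_gt ht1)).differentiableAt.differentiableWithinAt
  · rw [interior_Ioi]
    intro t ht
    have ht1 : (1:ℝ) < t := ht
    rw [(h5_hasDerivAt (lt_trans one_pos ht1) (ne_of_gt ht1)).deriv]
    apply div_nonneg (p_nonneg (le_of_lt ht1))
    have : 0 < t - 1 := by linarith
    positivity

/-- The function `h`, extended by continuity at `t = 1` with `h(1) = 0`, is monotonically
increasing on `(0, ∞)`. -/
theorem stmt_5 : MonotoneOn h5 (Set.Ioi (0 : ℝ)) := by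
  intro x hx y hy hxy
  have hx0 : (0:ℝ) < x := hx
  have hy0 : (0:ℝ) < y := hy
  rcases lt_or_ge y 1 with hy1 | hy1
  · exact h5_mono_Ioo ⟨hx0, lt_of_le_of_lt hxy hy1⟩ ⟨hy0, hy1⟩ hxy
  · rcases le_or_gt x 1 with hx1 | hx1
    · exact le_trans (h5_nonpos hx0 hx1) (h5_nonneg hy1)
    · exact h5_mono_Ioi hx1 (lt_of_lt_of_le hx1 hxy) hxy
end

section
/- For any α > 0 and r* > 0, the improper integral ∫_{r*}^∞ r* / (r·√(1+αr²)·√(r²−r*²)) dr converges and equals arctan(1/(r*·√α)). -/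
set_option maxHeartbeats 1000000


open MeasureTheory

/-- For `α > 0` and `r* > 0`, the improper integral
`∫_{r*}^∞ r*/(r·√(1+αr²)·√(r²−r*²)) dr` converges and equals `arctan(1/(r*·√α))`. -/
theorem stmt_11 (α rs : ℝ) (hα : 0 < α) (hrs : 0 < rs) :
    IntegrableOn
        (fun r : ℝ => rs / (r * Real.sqrt (1 + α * r ^ 2) * Real.sqrt (r ^ 2 - rs ^ 2)))
        (Set.Ioi rs) volume ∧
      ∫ r in Set.Ioi rs,
          rs / (r * Real.sqrt (1 + α * r ^ 2) * Real.sqrt (r ^ 2 - rs ^ 2)) =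
        Real.arctan (1 / (rs * Real.sqrt α)) := by
  set F : ℝ → ℝ := fun r =>
    Real.arctan (Real.sqrt (r ^ 2 - rs ^ 2) / (rs * Real.sqrt (1 + α * r ^ 2))) with hF
  set g : ℝ → ℝ := fun r : ℝ =>
    rs / (r * Real.sqrt (1 + α * r ^ 2) * Real.sqrt (r ^ 2 - rs ^ 2)) with hg
  -- continuity of F
  have hFc : Continuous F := by
    apply Real.continuous_arctan.comp
    apply Continuous.div
    · fun_prop
    · fun_prop
    · intro x
      have : 0 < 1 + α * x ^ 2 := by positivity
      have := Real.sqrt_pos.2 this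
      positivity
  -- derivative of F on Ioi rs
  have hderiv : ∀ r ∈ Set.Ioi rs, HasDerivAt F (g r) r := by
    intro r hr
    have hr' : rs < r := hr
    have hrpos : 0 < r := hrs.trans hr'
    have hu2 : 0 < r ^ 2 - rs ^ 2 := by nlinarith
    have hv2 : 0 < 1 + α * r ^ 2 := by positivity
    set u := Real.sqrt (r ^ 2 - rs ^ 2) with hu
    set v := Real.sqrt (1 + α * r ^ 2) with hv
    have hupos : 0 < u := Real.sqrt_pos.2 hu2
    have hvpos : 0 < v := Real.sqrt_pos.2 hv2
    have husq : u ^ 2 = r ^ 2 - rs ^ 2 := Real.sq_sqrt hu2.le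
    have hvsq : v ^ 2 = 1 + α * r ^ 2 := Real.sq_sqrt hv2.le
    have h1 : HasDerivAt (fun x : ℝ => x ^ 2 - rs ^ 2) (2 * r) r := by
      simpa using (hasDerivAt_pow 2 r).sub_const (rs ^ 2)
    have hU : HasDerivAt (fun x : ℝ => Real.sqrt (x ^ 2 - rs ^ 2)) (2 * r / (2 * u)) r :=
      h1.sqrt hu2.ne'
    have h2 : HasDerivAt (fun x : ℝ => 1 + α * x ^ 2) (α * (2 * r)) r := by
      simpa using ((hasDerivAt_pow 2 r).const_mul α).const_add 1
    have hV : HasDerivAt (fun x : ℝ => rs * Real.sqrt (1 + α * x ^ 2))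
        (rs * (α * (2 * r) / (2 * v))) r := (h2.sqrt hv2.ne').const_mul rs
    have hden : rs * v ≠ 0 := by positivity
    have hQ := hU.div hV hden
    have hFd := hQ.arctan
    convert hFd using 1
    · rfl
    simp only [hg, Pi.div_apply]
    rw [← hu, ← hv]
    have h1v : (1 : ℝ) + (u / (rs * v)) ^ 2 ≠ 0 := by positivity
    have hrne : r ≠ 0 := hrpos.ne'
    rw [div_eq_iff (by positivity)]
    field_simp
    linear_combination (1 + α * r ^ 2) * husq + (rs ^ 2 - r ^ 2) * hvsq
  -- nonnegativity of g on Ioi rs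
  have hpos : ∀ r ∈ Set.Ioi rs, 0 ≤ g r := by
    intro r hr
    have hrpos : 0 < r := hrs.trans hr
    have h1 : 0 ≤ Real.sqrt (1 + α * r ^ 2) := Real.sqrt_nonneg _
    have h2 : 0 ≤ Real.sqrt (r ^ 2 - rs ^ 2) := Real.sqrt_nonneg _
    positivity
  -- limit of F at infinity
  have hlim : Filter.Tendsto F Filter.atTop
      (nhds (Real.arctan (1 / (rs * Real.sqrt α)))) := by
    have hratio : Filter.Tendsto (fun r : ℝ => (r ^ 2 - rs ^ 2) / (1 + α * r ^ 2))
        Filter.atTop (nhds (1 / α)) := by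
      have hinv : Filter.Tendsto (fun r : ℝ => (r ^ 2)⁻¹) Filter.atTop (nhds 0) :=
        (Filter.tendsto_pow_atTop (two_ne_zero)).inv_tendsto_atTop
      have h1 : Filter.Tendsto (fun r : ℝ => (1 - rs ^ 2 * (r ^ 2)⁻¹) / ((r ^ 2)⁻¹ + α))
          Filter.atTop (nhds ((1 - rs ^ 2 * 0) / (0 + α))) := by
        exact Filter.Tendsto.div
          (tendsto_const_nhds.sub (tendsto_const_nhds.mul hinv))
          (hinv.add tendsto_const_nhds) (by simp [hα.ne'])
      simp only [mul_zero, sub_zero, zero_add] at h1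
      apply h1.congr'
      filter_upwards [Filter.eventually_gt_atTop (0 : ℝ)] with r hr
      have hr2 : (r : ℝ) ^ 2 ≠ 0 := by positivity
      have hv2 : (1 : ℝ) + α * r ^ 2 ≠ 0 := by positivity
      field_simp
    have hsq : Filter.Tendsto
        (fun r : ℝ => Real.sqrt ((r ^ 2 - rs ^ 2) / (1 + α * r ^ 2)) / rs)
        Filter.atTop (nhds (Real.sqrt (1 / α) / rs)) :=
      ((Real.continuous_sqrt.tendsto _).comp hratio).div_const rs
    have harct := (Real.continuous_arctan.tendsto _).comp hsq
    have heq : Real.arctan (Real.sqrt (1 / α) / rs) =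
        Real.arctan (1 / (rs * Real.sqrt α)) := by
      congr 1
      rw [one_div, Real.sqrt_inv]
      field_simp
    rw [heq] at harct
    apply harct.congr'
    filter_upwards [Filter.eventually_gt_atTop rs] with r hr
    have hrpos : 0 < r := hrs.trans hr
    have hu2 : (0 : ℝ) ≤ r ^ 2 - rs ^ 2 := by nlinarith
    have hv2 : (0 : ℝ) < 1 + α * r ^ 2 := by positivity
    simp only [Function.comp_apply, hF]
    rw [Real.sqrt_div hu2]
    congr 1
    rw [div_div]
    ring_nf
  -- assemble
  have hcont : ContinuousWithinAt F (Set.Ici rs) rs := hFc.continuousWithinAt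
  refine ⟨integrableOn_Ioi_deriv_of_nonneg hcont hderiv hpos hlim, ?_⟩
  have := integral_Ioi_of_hasDerivAt_of_nonneg hcont hderiv hpos hlim
  rw [this]
  have : F rs = 0 := by
    simp [hF, Real.arctan_eq_zero_iff]
  rw [this, sub_zero]
end

section
/- Let A be a positive definite n×n complex matrix and B any n×n complex matrix. Then Tr(A · ∫₀^∞ (A+sI)⁻¹ B (A+sI)⁻¹ B (A+sI)⁻¹ ds) = (1/2)·Tr(∫₀^∞ (A+sI)⁻¹ B (A+sI)⁻¹ B ds). -/
open MeasureTheory Matrix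
open scoped ComplexOrder

attribute [local instance] Matrix.frobeniusNormedAddCommGroup Matrix.frobeniusNormedSpace

open Set

section RingInstSection
attribute [local instance] Matrix.frobeniusNormedRing

namespace Stmt14Aux

lemma intOn_inv_sq {c : ℝ} (hc : 0 < c) :
    IntegrableOn (fun s : ℝ => ((c + s) ^ 2)⁻¹) (Ioi 0) volume := by
  have hderiv : ∀ x ∈ Ici (0:ℝ), HasDerivAt (fun s : ℝ => -(c + s)⁻¹) (((c + x) ^ 2)⁻¹) x := by
    intro x hx
    have hx' : (0:ℝ) ≤ x := hx
    have hne : c + x ≠ 0 := by positivity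
    have h1 : HasDerivAt (fun s : ℝ => c + s) 1 x := (hasDerivAt_id x).const_add c
    have h2 := (h1.inv hne).neg
    refine h2.congr_deriv ?_
    ring
  refine integrableOn_Ioi_deriv_of_nonneg' (l := 0) hderiv (fun x hx => ?_) ?_
  · have hx' : (0:ℝ) < x := hx
    positivity
  have : Filter.Tendsto (fun s : ℝ => (c + s)⁻¹) Filter.atTop (nhds 0) := by
    apply Filter.Tendsto.comp tendsto_inv_atTop_zero
    exact Filter.tendsto_atTop_add_const_left _ c Filter.tendsto_id
  simpa using this.neg

end Stmt14Aux

namespace Stmt14Aux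

open Filter

lemma contOn_q {a b : ℝ} (ha : 0 < a) (hb : 0 < b) :
    ContinuousOn (fun s : ℝ => ((a + s) * (b + s))⁻¹) (Ioi 0) := by
  apply ContinuousOn.inv₀
  · fun_prop
  · intro x hx
    have hx' : (0:ℝ) < x := hx
    positivity

lemma intOn_q {a b : ℝ} (ha : 0 < a) (hb : 0 < b) :
    IntegrableOn (fun s : ℝ => ((a + s) * (b + s))⁻¹) (Ioi 0) volume := by
  have hm : 0 < min a b := lt_min ha hb
  refine Integrable.mono' (intOn_inv_sq hm) ((contOn_q ha hb).aestronglyMeasurable measurableSet_Ioi) ?_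
  filter_upwards [ae_restrict_mem measurableSet_Ioi] with x hx
  have hx' : (0:ℝ) < x := hx
  have h1 : (0:ℝ) < (a + x) * (b + x) := by positivity
  rw [Real.norm_eq_abs, abs_of_nonneg (by positivity)]
  apply inv_anti₀ (by positivity)
  nlinarith [min_le_left a b, min_le_right a b]

lemma intOn_p {a b : ℝ} (ha : 0 < a) (hb : 0 < b) :
    IntegrableOn (fun s : ℝ => a / ((a + s) ^ 2 * (b + s))) (Ioi 0) volume := by
  have hmeas : ContinuousOn (fun s : ℝ => a / ((a + s) ^ 2 * (b + s))) (Ioi 0) := by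
    apply ContinuousOn.div continuousOn_const (by fun_prop)
    intro x hx
    have hx' : (0:ℝ) < x := hx
    positivity
  refine Integrable.mono' ((intOn_inv_sq ha).const_mul (a / b))
    (hmeas.aestronglyMeasurable measurableSet_Ioi) ?_
  filter_upwards [ae_restrict_mem measurableSet_Ioi] with x hx
  have hx' : (0:ℝ) < x := hx
  rw [Real.norm_eq_abs, abs_of_nonneg (by positivity)]
  calc a / ((a + x) ^ 2 * (b + x)) ≤ a / ((a + x) ^ 2 * b) := by
        have h2 : (0:ℝ) < (a + x) ^ 2 * b := by positivity
        gcongr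
        linarith
    _ = a / b * ((a + x) ^ 2)⁻¹ := by
        have h2 : (a + x) ≠ 0 := by positivity
        field_simp

lemma key_int {a b : ℝ} (ha : 0 < a) (hb : 0 < b) :
    (∫ s in Ioi (0:ℝ), a / ((a + s) ^ 2 * (b + s))) +
        (∫ s in Ioi (0:ℝ), b / ((b + s) ^ 2 * (a + s))) =
      ∫ s in Ioi (0:ℝ), ((a + s) * (b + s))⁻¹ := by
  set D : ℝ → ℝ := fun s =>
    a / ((a + s) ^ 2 * (b + s)) + b / ((b + s) ^ 2 * (a + s)) - ((a + s) * (b + s))⁻¹ with hDdef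
  have hpp : IntegrableOn
      (fun s : ℝ => a / ((a + s) ^ 2 * (b + s)) + b / ((b + s) ^ 2 * (a + s))) (Ioi 0) volume :=
    (intOn_p ha hb).add (intOn_p hb ha)
  have hint : IntegrableOn D (Ioi 0) volume := hpp.sub (intOn_q ha hb)
  have hderiv : ∀ x ∈ Ici (0:ℝ), HasDerivAt (fun s : ℝ => s / ((a + s) * (b + s))) (D x) x := by
    intro x hx
    have hx' : (0:ℝ) ≤ x := hx
    have hne : (a + x) * (b + x) ≠ 0 := by positivity
    have h1 : HasDerivAt (fun s : ℝ => (a + s) * (b + s)) ((b + x) + (a + x)) x := by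
      have := ((hasDerivAt_id x).const_add a).mul ((hasDerivAt_id x).const_add b)
      exact this.congr_deriv (by simp only [id_eq]; ring)
    have := (hasDerivAt_id x).div h1 hne
    refine this.congr_deriv ?_
    rw [hDdef]
    simp only [id_eq]
    have h2 : a + x ≠ 0 := by positivity
    have h3 : b + x ≠ 0 := by positivity
    field_simp
    ring
  have htend : Tendsto (fun s : ℝ => s / ((a + s) * (b + s))) atTop (nhds 0) := by
    have hub : ∀ᶠ s in atTop, s / ((a + s) * (b + s)) ≤ (b + s)⁻¹ := by
      filter_upwards [eventually_ge_atTop (0:ℝ)] with s hs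
      rw [div_le_iff₀ (by positivity), inv_mul_eq_div, le_div_iff₀ (by positivity)]
      nlinarith
    have hlb : ∀ᶠ s in atTop, (0:ℝ) ≤ s / ((a + s) * (b + s)) := by
      filter_upwards [eventually_ge_atTop (0:ℝ)] with s hs
      positivity
    have h2 : Tendsto (fun s : ℝ => (b + s)⁻¹) atTop (nhds 0) :=
      tendsto_inv_atTop_zero.comp (tendsto_atTop_add_const_left _ b tendsto_id)
    exact tendsto_of_tendsto_of_tendsto_of_le_of_le' tendsto_const_nhds h2 hlb hub
  have h0 : ∫ x in Ioi (0:ℝ), D x = 0 := by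
    have := integral_Ioi_of_hasDerivAt_of_tendsto' hderiv hint htend
    simpa using this
  rw [hDdef] at h0
  rw [integral_sub hpp (intOn_q ha hb), integral_add (intOn_p ha hb) (intOn_p hb ha)] at h0
  linarith

end Stmt14Aux

open Matrix


namespace Stmt14Aux

variable {n : ℕ}

lemma norm_diagonal_le {v : Fin n → ℂ} {c : ℝ} (hc : 0 ≤ c) (h : ∀ i, ‖v i‖ ≤ c) :
    ‖(Matrix.diagonal v : Matrix (Fin n) (Fin n) ℂ)‖ ≤ Real.sqrt n * c := by
  rw [Matrix.frobenius_norm_diagonal]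
  rw [PiLp.norm_eq_of_L2]
  have h1 : ∑ i, ‖(WithLp.equiv 2 (Fin n → ℂ)).symm v i‖ ^ 2 ≤ (n : ℝ) * c ^ 2 := by
    calc ∑ i, ‖(WithLp.equiv 2 (Fin n → ℂ)).symm v i‖ ^ 2 ≤ ∑ _i : Fin n, c ^ 2 := by
          apply Finset.sum_le_sum
          intro i _
          change ‖v i‖ ^ 2 ≤ c ^ 2
          have h2 := norm_nonneg (v i)
          nlinarith [h i]
      _ = (n : ℝ) * c ^ 2 := by simp [Finset.sum_const, mul_comm]
  calc Real.sqrt (∑ i, ‖(WithLp.equiv 2 (Fin n → ℂ)).symm v i‖ ^ 2)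
      ≤ Real.sqrt ((n : ℝ) * c ^ 2) := Real.sqrt_le_sqrt h1
    _ = Real.sqrt n * c := by
        rw [Real.sqrt_mul (by positivity), Real.sqrt_sq hc]

lemma trace_diag2 (d e : Fin n → ℂ) (C : Matrix (Fin n) (Fin n) ℂ) :
    (Matrix.diagonal d * C * Matrix.diagonal e * C).trace
      = ∑ i, ∑ j, d i * C i j * (e j * C j i) := by
  simp [Matrix.trace, Matrix.diag, Matrix.mul_apply, Matrix.diagonal_apply, ite_mul, mul_ite,
    zero_mul, mul_zero, Finset.sum_ite_eq, Finset.sum_ite_eq', Finset.mul_sum, Finset.sum_mul]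
  apply Finset.sum_congr rfl
  intro i _
  apply Finset.sum_congr rfl
  intro j _
  ring

lemma trace_dCdCd (d e f : Fin n → ℂ) (C : Matrix (Fin n) (Fin n) ℂ) :
    (Matrix.diagonal d * C * Matrix.diagonal e * C * Matrix.diagonal f).trace
      = ∑ i, ∑ j, (f i * d i) * C i j * (e j * C j i) := by
  rw [Matrix.trace_mul_comm, ← Matrix.mul_assoc, ← Matrix.mul_assoc, ← Matrix.mul_assoc,
    Matrix.diagonal_mul_diagonal, trace_diag2]

end Stmt14Aux

namespace Stmt14Aux

variable {n : ℕ}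

noncomputable def diagCLM : (Fin n → ℂ) →L[ℂ] Matrix (Fin n) (Fin n) ℂ :=
  LinearMap.toContinuousLinearMap (Matrix.diagonalLinearMap (Fin n) ℂ ℂ)

noncomputable def Dm (lam : Fin n → ℝ) (s : ℝ) : Matrix (Fin n) (Fin n) ℂ :=
  Matrix.diagonal fun i => (((lam i + s : ℝ)) : ℂ)⁻¹

lemma contOn_Dm {lam : Fin n → ℝ} (hlam : ∀ i, 0 < lam i) :
    ContinuousOn (fun s : ℝ => Dm lam s) (Ioi 0) := by
  have : (fun s : ℝ => Dm lam s)
      = (diagCLM : (Fin n → ℂ) →L[ℂ] Matrix (Fin n) (Fin n) ℂ) ∘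
        (fun s : ℝ => fun i => (((lam i + s : ℝ)) : ℂ)⁻¹) := by
    funext s
    simp [Dm, diagCLM, Matrix.diagonalLinearMap]
  rw [this]
  apply Continuous.comp_continuousOn (diagCLM.continuous)
  apply continuousOn_pi.2
  intro i
  apply ContinuousOn.inv₀
  · fun_prop
  · intro x hx
    have hx' : (0:ℝ) < x := hx
    have : (0:ℝ) < lam i + x := by have := hlam i; linarith
    simp only [ne_eq, Complex.ofReal_eq_zero]
    exact this.ne'

lemma norm_Dm_le {lam : Fin n → ℝ} (hlam : ∀ i, 0 < lam i) {m0 : ℝ} (hm0 : 0 < m0)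
    (hle : ∀ i, m0 ≤ lam i) {s : ℝ} (hs : 0 ≤ s) :
    ‖Dm lam s‖ ≤ Real.sqrt n * (m0 + s)⁻¹ := by
  apply norm_diagonal_le (by positivity)
  intro i
  have h1 : (0:ℝ) < lam i + s := by have := hlam i; linarith
  rw [norm_inv, Complex.norm_real, Real.norm_eq_abs, abs_of_pos h1]
  apply inv_anti₀ (by positivity)
  have := hle i; linarith

end Stmt14Aux

namespace Stmt14Aux

variable {n : ℕ}

lemma contOn_G3 (U V C : Matrix (Fin n) (Fin n) ℂ) {lam : Fin n → ℝ} (hlam : ∀ i, 0 < lam i) :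
    ContinuousOn (fun s : ℝ => U * (Dm lam s * C * Dm lam s * C * Dm lam s) * V) (Ioi 0) := by
  have hd := contOn_Dm hlam
  exact (continuousOn_const.mul
    ((((hd.mul continuousOn_const).mul hd).mul continuousOn_const).mul hd)).mul continuousOn_const

lemma contOn_G2 (U V C : Matrix (Fin n) (Fin n) ℂ) {lam : Fin n → ℝ} (hlam : ∀ i, 0 < lam i) :
    ContinuousOn (fun s : ℝ => U * (Dm lam s * C * Dm lam s * C) * V) (Ioi 0) := by
  have hd := contOn_Dm hlam
  exact (continuousOn_const.mul
    (((hd.mul continuousOn_const).mul hd).mul continuousOn_const)).mul continuousOn_const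

lemma intOn_G3 (U V C : Matrix (Fin n) (Fin n) ℂ) {lam : Fin n → ℝ} (hlam : ∀ i, 0 < lam i)
    (hn : 0 < n) :
    @IntegrableOn ℝ (Matrix (Fin n) (Fin n) ℂ) _ _ SeminormedAddGroup.toContinuousENorm
      (fun s : ℝ => U * (Dm lam s * C * Dm lam s * C * Dm lam s) * V)
      (Ioi 0) volume := by
  haveI : Nonempty (Fin n) := Fin.pos_iff_nonempty.mp hn
  haveI : TopologicalSpace.PseudoMetrizableSpace (Matrix (Fin n) (Fin n) ℂ) :=
    PseudoEMetricSpace.pseudoMetrizableSpace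
  set m0 := Finset.univ.inf' Finset.univ_nonempty lam with hm0def
  have hm0 : 0 < m0 := (Finset.lt_inf'_iff _).2 (fun i _ => hlam i)
  have hle : ∀ i, m0 ≤ lam i := fun i => Finset.inf'_le _ (Finset.mem_univ i)
  set c := Real.sqrt n with hcdef
  have hc : 0 ≤ c := Real.sqrt_nonneg _
  clear_value c
  refine Integrable.mono' ((intOn_inv_sq hm0).const_mul (‖U‖ * ‖V‖ * ‖C‖ ^ 2 * c ^ 3 / m0))
    ((contOn_G3 U V C hlam).aestronglyMeasurable measurableSet_Ioi) ?_
  filter_upwards [ae_restrict_mem measurableSet_Ioi] with s hs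
  have hs' : (0:ℝ) < s := hs
  have hy : (0:ℝ) < m0 + s := by linarith
  set x := ‖Dm lam s‖ with hxdef
  have hx0 : (0:ℝ) ≤ x := norm_nonneg _
  have hxle : x ≤ c * (m0 + s)⁻¹ := by
    rw [hcdef]; exact norm_Dm_le hlam hm0 hle hs'.le
  set k1 := ‖U‖ with hk1def; set k2 := ‖C‖ with hk2def; set k3 := ‖V‖ with hk3def
  have hk1 : (0:ℝ) ≤ k1 := norm_nonneg _
  have hk2 : (0:ℝ) ≤ k2 := norm_nonneg _
  have hk3 : (0:ℝ) ≤ k3 := norm_nonneg _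
  have t1 : ‖Dm lam s * C‖ ≤ x * k2 := norm_mul_le _ _
  have t2 : ‖Dm lam s * C * Dm lam s‖ ≤ x * k2 * x :=
    le_trans (norm_mul_le _ _) (mul_le_mul_of_nonneg_right t1 hx0)
  have t3 : ‖Dm lam s * C * Dm lam s * C‖ ≤ x * k2 * x * k2 :=
    le_trans (norm_mul_le _ _) (mul_le_mul_of_nonneg_right t2 (norm_nonneg C))
  have t4 : ‖Dm lam s * C * Dm lam s * C * Dm lam s‖ ≤ x * k2 * x * k2 * x :=
    le_trans (norm_mul_le _ _) (mul_le_mul_of_nonneg_right t3 hx0)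
  have t6 : ‖U * (Dm lam s * C * Dm lam s * C * Dm lam s) * V‖
      ≤ k1 * (x * k2 * x * k2 * x) * k3 := by
    refine le_trans (norm_mul_le _ _) ?_
    refine mul_le_mul_of_nonneg_right (le_trans (norm_mul_le _ _) ?_) (norm_nonneg V)
    exact mul_le_mul_of_nonneg_left t4 (norm_nonneg U)
  refine t6.trans ?_
  have h3 : x ^ 3 ≤ c ^ 3 * ((m0 + s)⁻¹) ^ 3 := by
    have := pow_le_pow_left₀ hx0 hxle 3
    rwa [mul_pow] at this
  have h4 : c ^ 3 * ((m0 + s)⁻¹) ^ 3 ≤ c ^ 3 * (m0⁻¹ * ((m0 + s) ^ 2)⁻¹) := by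
    have h5 : ((m0 + s)⁻¹) ^ 3 = (m0 + s)⁻¹ * ((m0 + s) ^ 2)⁻¹ := by
      rw [inv_pow, show ((m0 + s):ℝ) ^ 3 = (m0 + s) * (m0 + s) ^ 2 by ring, mul_inv]
    rw [h5]
    have h6 : (m0 + s)⁻¹ ≤ m0⁻¹ := by
      apply inv_anti₀ hm0; linarith
    have h7 : (0:ℝ) ≤ ((m0 + s) ^ 2)⁻¹ := by positivity
    have := mul_le_mul_of_nonneg_right h6 h7
    nlinarith [pow_nonneg hc 3]
  have h8 : k1 * (x * k2 * x * k2 * x) * k3 = (k1 * k3 * k2 ^ 2) * x ^ 3 := by ring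
  rw [h8]
  have h9 : (k1 * k3 * k2 ^ 2) * x ^ 3 ≤ (k1 * k3 * k2 ^ 2) * (c ^ 3 * (m0⁻¹ * ((m0 + s) ^ 2)⁻¹)) :=
    mul_le_mul_of_nonneg_left (h3.trans h4)
      (mul_nonneg (mul_nonneg hk1 hk3) (pow_nonneg hk2 2))
  refine h9.trans (le_of_eq ?_)
  ring

lemma intOn_G2 (U V C : Matrix (Fin n) (Fin n) ℂ) {lam : Fin n → ℝ} (hlam : ∀ i, 0 < lam i)
    (hn : 0 < n) :
    @IntegrableOn ℝ (Matrix (Fin n) (Fin n) ℂ) _ _ SeminormedAddGroup.toContinuousENorm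
      (fun s : ℝ => U * (Dm lam s * C * Dm lam s * C) * V) (Ioi 0) volume := by
  haveI : Nonempty (Fin n) := Fin.pos_iff_nonempty.mp hn
  haveI : TopologicalSpace.PseudoMetrizableSpace (Matrix (Fin n) (Fin n) ℂ) :=
    PseudoEMetricSpace.pseudoMetrizableSpace
  set m0 := Finset.univ.inf' Finset.univ_nonempty lam with hm0def
  have hm0 : 0 < m0 := (Finset.lt_inf'_iff _).2 (fun i _ => hlam i)
  have hle : ∀ i, m0 ≤ lam i := fun i => Finset.inf'_le _ (Finset.mem_univ i)
  refine Integrable.mono' ((intOn_inv_sq hm0).const_mul (‖U‖ * ‖V‖ * ‖C‖ ^ 2 * (n:ℝ)))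
    ((contOn_G2 U V C hlam).aestronglyMeasurable measurableSet_Ioi) ?_
  filter_upwards [ae_restrict_mem measurableSet_Ioi] with s hs
  have hs' : (0:ℝ) < s := hs
  have hy : (0:ℝ) < m0 + s := by linarith
  set x := ‖Dm lam s‖ with hxdef
  have hx0 : (0:ℝ) ≤ x := norm_nonneg _
  have hxle : x ≤ Real.sqrt n * (m0 + s)⁻¹ := norm_Dm_le hlam hm0 hle hs'.le
  set k1 := ‖U‖ with hk1def; set k2 := ‖C‖ with hk2def; set k3 := ‖V‖ with hk3def
  have hk1 : (0:ℝ) ≤ k1 := norm_nonneg _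
  have hk2 : (0:ℝ) ≤ k2 := norm_nonneg _
  have hk3 : (0:ℝ) ≤ k3 := norm_nonneg _
  have t1 : ‖Dm lam s * C‖ ≤ x * k2 := norm_mul_le _ _
  have t2 : ‖Dm lam s * C * Dm lam s‖ ≤ x * k2 * x :=
    le_trans (norm_mul_le _ _) (mul_le_mul_of_nonneg_right t1 hx0)
  have t3 : ‖Dm lam s * C * Dm lam s * C‖ ≤ x * k2 * x * k2 :=
    le_trans (norm_mul_le _ _) (mul_le_mul_of_nonneg_right t2 (norm_nonneg C))
  have t6 : ‖U * (Dm lam s * C * Dm lam s * C) * V‖ ≤ k1 * (x * k2 * x * k2) * k3 := by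
    refine le_trans (norm_mul_le _ _) ?_
    refine mul_le_mul_of_nonneg_right (le_trans (norm_mul_le _ _) ?_) (norm_nonneg V)
    exact mul_le_mul_of_nonneg_left t3 (norm_nonneg U)
  refine t6.trans ?_
  have h3 : x ^ 2 ≤ (n:ℝ) * ((m0 + s) ^ 2)⁻¹ := by
    have := pow_le_pow_left₀ hx0 hxle 2
    rw [mul_pow] at this
    rw [Real.sq_sqrt (by positivity : (0:ℝ) ≤ (n:ℝ))] at this
    rwa [inv_pow] at this
  have h8 : k1 * (x * k2 * x * k2) * k3 = (k1 * k3 * k2 ^ 2) * x ^ 2 := by ring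
  rw [h8]
  have h9 : (k1 * k3 * k2 ^ 2) * x ^ 2 ≤ (k1 * k3 * k2 ^ 2) * ((n:ℝ) * ((m0 + s) ^ 2)⁻¹) :=
    mul_le_mul_of_nonneg_left h3 (mul_nonneg (mul_nonneg hk1 hk3) (pow_nonneg hk2 2))
  refine h9.trans (le_of_eq ?_)
  ring

end Stmt14Aux

namespace Stmt14Aux

variable {n : ℕ}

lemma sum_repr {A U : Matrix (Fin n) (Fin n) ℂ} {lam : Fin n → ℝ}
    (hU : U * star U = 1)
    (hrep : A = U * Matrix.diagonal (fun i => (lam i : ℂ)) * star U) (s : ℝ) :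
    A + (s : ℂ) • 1 = U * Matrix.diagonal (fun i => (((lam i + s : ℝ)) : ℂ)) * star U := by
  have h1 : (s : ℂ) • (1 : Matrix (Fin n) (Fin n) ℂ)
      = U * ((s : ℂ) • 1) * star U := by
    rw [Matrix.mul_smul, Matrix.smul_mul, Matrix.mul_one, hU]
  rw [hrep, h1, ← Matrix.add_mul, ← Matrix.mul_add]
  congr 2
  rw [Matrix.smul_one_eq_diagonal, Matrix.diagonal_add]
  congr 1
  funext i
  push_cast
  ring

lemma inv_repr {U : Matrix (Fin n) (Fin n) ℂ} (hU : U * star U = 1) (hU' : star U * U = 1)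
    (v : Fin n → ℂ) (hv : ∀ i, v i ≠ 0) :
    (U * Matrix.diagonal v * star U)⁻¹ = U * Matrix.diagonal (fun i => (v i)⁻¹) * star U := by
  apply Matrix.inv_eq_right_inv
  have h1 : Matrix.diagonal v * Matrix.diagonal (fun i => (v i)⁻¹) = 1 := by
    rw [Matrix.diagonal_mul_diagonal]
    have : (fun i => v i * (v i)⁻¹) = fun _ => (1:ℂ) := by
      funext i; exact mul_inv_cancel₀ (hv i)
    rw [this, Matrix.diagonal_one]
  calc U * Matrix.diagonal v * star U * (U * Matrix.diagonal (fun i => (v i)⁻¹) * star U)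
      = U * Matrix.diagonal v * ((star U * U) * (Matrix.diagonal (fun i => (v i)⁻¹) * star U)) := by
        simp only [Matrix.mul_assoc]
    _ = U * (Matrix.diagonal v * Matrix.diagonal (fun i => (v i)⁻¹)) * star U := by
        rw [hU', Matrix.one_mul]
        simp only [Matrix.mul_assoc]
    _ = 1 := by rw [h1, Matrix.mul_one, hU]

lemma trace_conj {U : Matrix (Fin n) (Fin n) ℂ} (hU' : star U * U = 1)
    (X : Matrix (Fin n) (Fin n) ℂ) : (U * X * star U).trace = X.trace := by
  rw [Matrix.trace_mul_comm, ← Matrix.mul_assoc, hU', Matrix.one_mul]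

noncomputable def traceCLM : Matrix (Fin n) (Fin n) ℂ →L[ℂ] ℂ :=
  LinearMap.toContinuousLinearMap (Matrix.traceLinearMap (Fin n) ℂ ℂ)

@[simp] lemma traceCLM_apply (M : Matrix (Fin n) (Fin n) ℂ) :
    (traceCLM : Matrix (Fin n) (Fin n) ℂ →L[ℂ] ℂ) M = M.trace := rfl

noncomputable def traceMulCLM (A : Matrix (Fin n) (Fin n) ℂ) :
    Matrix (Fin n) (Fin n) ℂ →L[ℂ] ℂ :=
  LinearMap.toContinuousLinearMap
    ((Matrix.traceLinearMap (Fin n) ℂ ℂ).comp (LinearMap.mulLeft ℂ A))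

@[simp] lemma traceMulCLM_apply (A M : Matrix (Fin n) (Fin n) ℂ) :
    traceMulCLM A M = (A * M).trace := rfl

end Stmt14Aux

end RingInstSection

open Stmt14Aux in
/-- For a positive definite `A` and arbitrary `B`,
`Tr(A · ∫₀^∞ (A+sI)⁻¹ B (A+sI)⁻¹ B (A+sI)⁻¹ ds) = (1/2)·Tr(∫₀^∞ (A+sI)⁻¹ B (A+sI)⁻¹ B ds)`,
both improper matrix-valued integrals converging. -/
theorem stmt_14 {n : ℕ} (A B : Matrix (Fin n) (Fin n) ℂ) (hA : A.PosDef) :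
    @IntegrableOn ℝ (Matrix (Fin n) (Fin n) ℂ) _ _ SeminormedAddGroup.toContinuousENorm
        (fun s : ℝ =>
          (A + (s : ℂ) • 1)⁻¹ * B * (A + (s : ℂ) • 1)⁻¹ * B * (A + (s : ℂ) • 1)⁻¹)
        (Set.Ioi 0) volume ∧
    @IntegrableOn ℝ (Matrix (Fin n) (Fin n) ℂ) _ _ SeminormedAddGroup.toContinuousENorm
        (fun s : ℝ => (A + (s : ℂ) • 1)⁻¹ * B * (A + (s : ℂ) • 1)⁻¹ * B)
        (Set.Ioi 0) volume ∧
    (A * ∫ s in Set.Ioi (0 : ℝ),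
          (A + (s : ℂ) • 1)⁻¹ * B * (A + (s : ℂ) • 1)⁻¹ * B * (A + (s : ℂ) • 1)⁻¹).trace =
      (1 / 2 : ℂ) *
        (∫ s in Set.Ioi (0 : ℝ),
            (A + (s : ℂ) • 1)⁻¹ * B * (A + (s : ℂ) • 1)⁻¹ * B).trace := by

  classical
  rcases Nat.eq_zero_or_pos n with hn0 | hn
  · subst hn0
    have ht : ∀ M : Matrix (Fin 0) (Fin 0) ℂ, M.trace = 0 := fun M => by
      simp [Matrix.trace]
    have hz3 : (fun s : ℝ =>
        (A + (s : ℂ) • 1)⁻¹ * B * (A + (s : ℂ) • 1)⁻¹ * B * (A + (s : ℂ) • 1)⁻¹)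
        = fun _ => (0 : Matrix (Fin 0) (Fin 0) ℂ) := funext fun _ => Subsingleton.elim _ _
    have hz2 : (fun s : ℝ => (A + (s : ℂ) • 1)⁻¹ * B * (A + (s : ℂ) • 1)⁻¹ * B)
        = fun _ => (0 : Matrix (Fin 0) (Fin 0) ℂ) := funext fun _ => Subsingleton.elim _ _
    refine ⟨?_, ?_, ?_⟩
    · rw [hz3]; exact (integrable_zero _ _ _).integrableOn
    · rw [hz2]; exact (integrable_zero _ _ _).integrableOn
    · rw [ht, ht]; ring
  · have hH := hA.1
    set U : Matrix (Fin n) (Fin n) ℂ :=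
      (Matrix.IsHermitian.eigenvectorUnitary hH : Matrix (Fin n) (Fin n) ℂ) with hUdef
    have hU : U * star U = 1 :=
      Matrix.mem_unitaryGroup_iff.mp (Matrix.IsHermitian.eigenvectorUnitary hH).2
    have hU' : star U * U = 1 :=
      Matrix.mem_unitaryGroup_iff'.mp (Matrix.IsHermitian.eigenvectorUnitary hH).2
    set lam : Fin n → ℝ := hH.eigenvalues with hlamdef
    have hlam : ∀ i, 0 < lam i := fun i => hA.eigenvalues_pos i
    have hrep : A = U * Matrix.diagonal (fun i => (lam i : ℂ)) * star U := by
      exact hH.spectral_theorem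
    have hres : ∀ s : ℝ, 0 ≤ s → (A + (s : ℂ) • 1)⁻¹ = U * Dm lam s * star U := by
      intro s hs
      rw [sum_repr hU hrep s, Dm]
      exact inv_repr hU hU' _ (fun i =>
        Complex.ofReal_ne_zero.mpr (by have := hlam i; linarith : (0:ℝ) < lam i + s).ne')
    set C := star U * B * U with hCdef
    have hG3 : ∀ s : ℝ, s ∈ Set.Ioi (0:ℝ) →
        (A + (s : ℂ) • 1)⁻¹ * B * (A + (s : ℂ) • 1)⁻¹ * B * (A + (s : ℂ) • 1)⁻¹
          = U * (Dm lam s * C * Dm lam s * C * Dm lam s) * star U := by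
      intro s hs
      rw [hres s (le_of_lt hs), hCdef]
      simp only [Matrix.mul_assoc, hU, Matrix.mul_one]
    have hG2 : ∀ s : ℝ, s ∈ Set.Ioi (0:ℝ) →
        (A + (s : ℂ) • 1)⁻¹ * B * (A + (s : ℂ) • 1)⁻¹ * B
          = U * (Dm lam s * C * Dm lam s * C) * star U := by
      intro s hs
      rw [hres s (le_of_lt hs), hCdef]
      simp only [Matrix.mul_assoc, hU, Matrix.mul_one]
    have hint3 : @IntegrableOn ℝ (Matrix (Fin n) (Fin n) ℂ) _ _ SeminormedAddGroup.toContinuousENorm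
        (fun s : ℝ => U * (Dm lam s * C * Dm lam s * C * Dm lam s) * star U)
        (Set.Ioi 0) volume := intOn_G3 U (star U) C hlam hn
    have hint2 : @IntegrableOn ℝ (Matrix (Fin n) (Fin n) ℂ) _ _ SeminormedAddGroup.toContinuousENorm
        (fun s : ℝ => U * (Dm lam s * C * Dm lam s * C) * star U)
        (Set.Ioi 0) volume := intOn_G2 U (star U) C hlam hn
    have hF3int : @IntegrableOn ℝ (Matrix (Fin n) (Fin n) ℂ) _ _ SeminormedAddGroup.toContinuousENorm
        (fun s : ℝ =>
          (A + (s : ℂ) • 1)⁻¹ * B * (A + (s : ℂ) • 1)⁻¹ * B * (A + (s : ℂ) • 1)⁻¹)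
        (Set.Ioi 0) volume :=
      hint3.congr_fun (fun s hs => (hG3 s hs).symm) measurableSet_Ioi
    have hF2int : @IntegrableOn ℝ (Matrix (Fin n) (Fin n) ℂ) _ _ SeminormedAddGroup.toContinuousENorm
        (fun s : ℝ => (A + (s : ℂ) • 1)⁻¹ * B * (A + (s : ℂ) • 1)⁻¹ * B)
        (Set.Ioi 0) volume :=
      hint2.congr_fun (fun s hs => (hG2 s hs).symm) measurableSet_Ioi
    refine ⟨hF3int, hF2int, ?_⟩
    rw [setIntegral_congr_fun measurableSet_Ioi hG3,
      setIntegral_congr_fun measurableSet_Ioi hG2]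
    -- swap trace and integral
    have hswap3 : (A * ∫ s in Set.Ioi (0:ℝ),
          U * (Dm lam s * C * Dm lam s * C * Dm lam s) * star U).trace
        = ∫ s in Set.Ioi (0:ℝ),
            (A * (U * (Dm lam s * C * Dm lam s * C * Dm lam s) * star U)).trace := by
      have h := ContinuousLinearMap.integral_comp_comm (traceMulCLM A) hint3
      exact h.symm
    have hswap2 : (∫ s in Set.Ioi (0:ℝ),
          U * (Dm lam s * C * Dm lam s * C) * star U).trace
        = ∫ s in Set.Ioi (0:ℝ),
            (U * (Dm lam s * C * Dm lam s * C) * star U).trace := by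
      have h := ContinuousLinearMap.integral_comp_comm
        (traceCLM : Matrix (Fin n) (Fin n) ℂ →L[ℂ] ℂ) hint2
      exact h.symm
    rw [hswap3, hswap2]
    -- trace formulas
    have hcan : ∀ X : Matrix (Fin n) (Fin n) ℂ, star U * (U * X) = X := fun X => by
      rw [← Matrix.mul_assoc, hU', Matrix.one_mul]
    have htr3 : ∀ s : ℝ, s ∈ Set.Ioi (0:ℝ) →
        (A * (U * (Dm lam s * C * Dm lam s * C * Dm lam s) * star U)).trace
          = ∑ i, ∑ j, (C i j * C j i) *
              ((lam i / ((lam i + s) ^ 2 * (lam j + s)) : ℝ) : ℂ) := by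
      intro s hs
      have hs' : (0:ℝ) < s := hs
      have hid : A * (U * (Dm lam s * C * Dm lam s * C * Dm lam s) * star U)
          = U * (Matrix.diagonal (fun i => (lam i : ℂ)) * Dm lam s * C * Dm lam s * C
              * Dm lam s) * star U := by
        conv_lhs => rw [hrep]
        simp only [Matrix.mul_assoc]
        rw [hcan]
      rw [hid, trace_conj hU', Dm, Matrix.diagonal_mul_diagonal, trace_dCdCd]
      apply Finset.sum_congr rfl
      intro i _
      apply Finset.sum_congr rfl
      intro j _
      have h1 : ((lam i + s : ℝ) : ℂ) ≠ 0 :=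
        Complex.ofReal_ne_zero.mpr (by have := hlam i; linarith : (0:ℝ) < lam i + s).ne'
      have h2 : ((lam j + s : ℝ) : ℂ) ≠ 0 :=
        Complex.ofReal_ne_zero.mpr (by have := hlam j; linarith : (0:ℝ) < lam j + s).ne'
      push_cast at h1 h2 ⊢
      field_simp
    have htr2 : ∀ s : ℝ, s ∈ Set.Ioi (0:ℝ) →
        (U * (Dm lam s * C * Dm lam s * C) * star U).trace
          = ∑ i, ∑ j, (C i j * C j i) *
              ((((lam i + s) * (lam j + s))⁻¹ : ℝ) : ℂ) := by
      intro s hs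
      have hs' : (0:ℝ) < s := hs
      rw [trace_conj hU', Dm, trace_diag2]
      apply Finset.sum_congr rfl
      intro i _
      apply Finset.sum_congr rfl
      intro j _
      have h1 : ((lam i + s : ℝ) : ℂ) ≠ 0 :=
        Complex.ofReal_ne_zero.mpr (by have := hlam i; linarith : (0:ℝ) < lam i + s).ne'
      have h2 : ((lam j + s : ℝ) : ℂ) ≠ 0 :=
        Complex.ofReal_ne_zero.mpr (by have := hlam j; linarith : (0:ℝ) < lam j + s).ne'
      push_cast at h1 h2 ⊢
      field_simp
    rw [setIntegral_congr_fun measurableSet_Ioi htr3,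
      setIntegral_congr_fun measurableSet_Ioi htr2]
    -- exchange sum and integral
    have hterm3 : ∀ i j : Fin n, Integrable
        (fun s : ℝ => (C i j * C j i) * ((lam i / ((lam i + s) ^ 2 * (lam j + s)) : ℝ) : ℂ))
        (volume.restrict (Set.Ioi 0)) :=
      fun i j => (Integrable.ofReal (intOn_p (hlam i) (hlam j))).const_mul _
    have hterm2 : ∀ i j : Fin n, Integrable
        (fun s : ℝ => (C i j * C j i) * ((((lam i + s) * (lam j + s))⁻¹ : ℝ) : ℂ))
        (volume.restrict (Set.Ioi 0)) :=
      fun i j => (Integrable.ofReal (intOn_q (hlam i) (hlam j))).const_mul _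
    rw [integral_finset_sum Finset.univ
      (fun i _ => integrable_finset_sum Finset.univ (fun j _ => hterm3 i j))]
    rw [integral_finset_sum Finset.univ
      (fun i _ => integrable_finset_sum Finset.univ (fun j _ => hterm2 i j))]
    have hred3 : ∀ i : Fin n, (∫ s in Set.Ioi (0:ℝ), ∑ j, (C i j * C j i) *
          ((lam i / ((lam i + s) ^ 2 * (lam j + s)) : ℝ) : ℂ))
        = ∑ j, (C i j * C j i) *
            ((∫ s in Set.Ioi (0:ℝ), lam i / ((lam i + s) ^ 2 * (lam j + s)) : ℝ) : ℂ) := by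
      intro i
      rw [integral_finset_sum Finset.univ (fun j _ => hterm3 i j)]
      apply Finset.sum_congr rfl
      intro j _
      rw [integral_const_mul]
      congr 1
      exact integral_ofReal (𝕜 := ℂ)
    have hred2 : ∀ i : Fin n, (∫ s in Set.Ioi (0:ℝ), ∑ j, (C i j * C j i) *
          ((((lam i + s) * (lam j + s))⁻¹ : ℝ) : ℂ))
        = ∑ j, (C i j * C j i) *
            ((∫ s in Set.Ioi (0:ℝ), ((lam i + s) * (lam j + s))⁻¹ : ℝ) : ℂ) := by
      intro i
      rw [integral_finset_sum Finset.univ (fun j _ => hterm2 i j)]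
      apply Finset.sum_congr rfl
      intro j _
      rw [integral_const_mul]
      congr 1
      exact integral_ofReal (𝕜 := ℂ)
    simp only [hred3, hred2]
    -- final algebra
    set P : Fin n → Fin n → ℝ :=
      fun i j => ∫ s in Set.Ioi (0:ℝ), lam i / ((lam i + s) ^ 2 * (lam j + s)) with hPdef
    set Q : Fin n → Fin n → ℝ :=
      fun i j => ∫ s in Set.Ioi (0:ℝ), ((lam i + s) * (lam j + s))⁻¹ with hQdef
    have hkey : ∀ i j, P i j + P j i = Q i j := fun i j => key_int (hlam i) (hlam j)
    have hsym : ∀ i j : Fin n, C j i * C i j = C i j * C j i := fun i j => mul_comm _ _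
    have hswapsum : (∑ i, ∑ j, (C i j * C j i) * ((P i j : ℝ) : ℂ))
        = ∑ i, ∑ j, (C i j * C j i) * ((P j i : ℝ) : ℂ) := by
      rw [Finset.sum_comm]
      apply Finset.sum_congr rfl
      intro i _
      apply Finset.sum_congr rfl
      intro j _
      rw [hsym]
    have h2 : (∑ i, ∑ j, (C i j * C j i) * ((P i j : ℝ) : ℂ))
          + (∑ i, ∑ j, (C i j * C j i) * ((P i j : ℝ) : ℂ))
        = ∑ i, ∑ j, (C i j * C j i) * ((Q i j : ℝ) : ℂ) := by
      nth_rewrite 2 [hswapsum]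
      rw [← Finset.sum_add_distrib]
      apply Finset.sum_congr rfl
      intro i _
      rw [← Finset.sum_add_distrib]
      apply Finset.sum_congr rfl
      intro j _
      rw [← mul_add, ← Complex.ofReal_add, hkey i j]
    linear_combination h2 / 2
end

section
/- Let A and B be positive definite n×n complex matrices such that A+B is also positive definite. Then ln(A+B) − ln(A) = ∫₀^∞ ((A+uI)⁻¹ − (A+B+uI)⁻¹) du, where ln denotes the matrix logarithm (functional calculus on positive definite matrices) and the improper matrix-valued integral converges. -/
open MeasureTheory Matrix
open scoped ComplexOrder

attribute [local instance] Matrix.frobeniusNormedAddCommGroup Matrix.frobeniusNormedSpace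

/-- The matrix logarithm of a Hermitian matrix, via the spectral theorem
(junk value `0` for non-Hermitian input). -/
noncomputable def matLog {n : Type*} [Fintype n] [DecidableEq n] (A : Matrix n n ℂ) :
    Matrix n n ℂ :=
  if hA : A.IsHermitian then
    (hA.eigenvectorUnitary : Matrix n n ℂ) *
      Matrix.diagonal (fun i => (Real.log (hA.eigenvalues i) : ℂ)) *
        star (hA.eigenvectorUnitary : Matrix n n ℂ)
  else 0

open Filter


lemma hasDerivAt_aux {a : ℝ} (ha : 0 < a) {x : ℝ} (hx : 0 ≤ x) :
    HasDerivAt (fun u : ℝ => Real.log (a + u)) (a + x)⁻¹ x := by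
  have h1 : HasDerivAt (fun u : ℝ => a + u) 1 x := (hasDerivAt_id x).const_add a
  have h2 := (Real.hasDerivAt_log (by positivity : a + x ≠ 0)).comp x h1
  simpa [Function.comp_def] using h2

lemma tendsto_aux {a b : ℝ} (ha : 0 < a) (hb : 0 < b) :
    Tendsto (fun u : ℝ => Real.log (a + u) - Real.log (b + u)) atTop (nhds 0) := by
  have hbu : Tendsto (fun u : ℝ => b + u) atTop atTop :=
    tendsto_atTop_add_const_left _ b tendsto_id
  have h1 : Tendsto (fun u : ℝ => 1 + (a - b) / (b + u)) atTop (nhds 1) := by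
    have := (hbu.const_div_atTop (a - b)).const_add 1
    simpa using this
  have h2 : Tendsto (fun u : ℝ => Real.log (1 + (a - b) / (b + u))) atTop (nhds 0) := by
    have := (Real.continuousAt_log (by norm_num : (1:ℝ) ≠ 0)).tendsto.comp h1
    simpa [Function.comp_def] using this
  refine h2.congr' ?_
  filter_upwards [eventually_ge_atTop 0] with u hu
  have h3 : a + u ≠ 0 := by positivity
  have h4 : b + u ≠ 0 := by positivity
  rw [← Real.log_div h3 h4]
  congr 1
  field_simp
  ring

lemma scalar_integrable_le {a b : ℝ} (ha : 0 < a) (hab : a ≤ b) :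
    IntegrableOn (fun u : ℝ => (a + u)⁻¹ - (b + u)⁻¹) (Set.Ioi 0) := by
  have hb : 0 < b := lt_of_lt_of_le ha hab
  refine integrableOn_Ioi_deriv_of_nonneg'
    (g := fun u => Real.log (a + u) - Real.log (b + u))
    (fun x hx => (hasDerivAt_aux ha hx).sub (hasDerivAt_aux hb hx)) ?_ (tendsto_aux ha hb)
  intro x hx
  have hx0 : (0:ℝ) < x := hx
  have h1 : 0 < a + x := by positivity
  have h2 : (b + x)⁻¹ ≤ (a + x)⁻¹ := by gcongr
  linarith

lemma scalar_integrable {a b : ℝ} (ha : 0 < a) (hb : 0 < b) :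
    IntegrableOn (fun u : ℝ => (a + u)⁻¹ - (b + u)⁻¹) (Set.Ioi 0) := by
  rcases le_total a b with h | h
  · exact scalar_integrable_le ha h
  · exact IntegrableOn.congr_fun (scalar_integrable_le hb h).neg (fun u _ => by simp [Pi.neg_apply, neg_sub]) measurableSet_Ioi

lemma scalar_integral {a b : ℝ} (ha : 0 < a) (hb : 0 < b) :
    ∫ u in Set.Ioi (0:ℝ), ((a + u)⁻¹ - (b + u)⁻¹) = Real.log b - Real.log a := by
  have h := integral_Ioi_of_hasDerivAt_of_tendsto'
    (f := fun u => Real.log (a + u) - Real.log (b + u))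
    (fun x hx => (hasDerivAt_aux ha hx).sub (hasDerivAt_aux hb hx))
    (scalar_integrable ha hb) (tendsto_aux ha hb)
  rw [h]
  simp

lemma conj_diag_sum {n : ℕ} (U : Matrix (Fin n) (Fin n) ℂ) (c : Fin n → ℝ) :
    ∑ i, c i • (U * diagonal (Pi.single i (1:ℂ)) * star U) =
      U * diagonal (fun i => (c i : ℂ)) * star U := by
  have h1 : ∀ i : Fin n, c i • (U * diagonal (Pi.single i (1:ℂ)) * star U)
      = U * (c i • diagonal (Pi.single i (1:ℂ))) * star U := by
    intro i
    rw [mul_smul_comm, smul_mul_assoc]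
  simp_rw [h1, ← Finset.sum_mul, ← Finset.mul_sum]
  congr 2
  ext j k
  rcases eq_or_ne j k with rfl | h
  · simp [Matrix.sum_apply, Matrix.diagonal_apply, Pi.single_apply, Complex.real_smul]
  · simp [Matrix.sum_apply, Matrix.diagonal_apply, h]

lemma resolvent_eq {n : ℕ} {M : Matrix (Fin n) (Fin n) ℂ} (hM : M.PosDef) {u : ℝ} (hu : 0 ≤ u) :
    (M + (u:ℂ) • 1)⁻¹ = (hM.isHermitian.eigenvectorUnitary : Matrix (Fin n) (Fin n) ℂ) *
      diagonal (fun i => (((hM.isHermitian.eigenvalues i + u)⁻¹ : ℝ) : ℂ)) *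
      star (hM.isHermitian.eigenvectorUnitary : Matrix (Fin n) (Fin n) ℂ) := by
  set U : Matrix (Fin n) (Fin n) ℂ := (hM.isHermitian.eigenvectorUnitary : Matrix (Fin n) (Fin n) ℂ) with hU
  have hU1 : U * star U = 1 := mem_unitaryGroup_iff.mp hM.isHermitian.eigenvectorUnitary.2
  have hU2 : star U * U = 1 := mem_unitaryGroup_iff'.mp hM.isHermitian.eigenvectorUnitary.2
  have hpos : ∀ i, (0:ℝ) < hM.isHermitian.eigenvalues i + u :=
    fun i => add_pos_of_pos_of_nonneg (hM.eigenvalues_pos i) hu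
  have hsm : (u:ℂ) • (1 : Matrix (Fin n) (Fin n) ℂ) = diagonal (fun _ => (u:ℂ)) := by
    ext i j
    rcases eq_or_ne i j with rfl | h
    · simp [Matrix.diagonal_apply]
    · simp [Matrix.diagonal_apply, Matrix.one_apply, h]
  have hMd : M + (u:ℂ) • 1 =
      U * diagonal (fun i => (((hM.isHermitian.eigenvalues i + u : ℝ)) : ℂ)) * star U := by
    conv_lhs => rw [hM.isHermitian.spectral_theorem, Unitary.conjStarAlgAut_apply]
    have h2 : (u:ℂ) • (1 : Matrix (Fin n) (Fin n) ℂ) = U * ((u:ℂ) • 1) * star U := by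
      rw [mul_smul_comm, smul_mul_assoc, Matrix.mul_one, hU1]
    rw [h2, ← Matrix.add_mul, ← Matrix.mul_add, hsm, diagonal_add]
    congr 2
    funext i
    push_cast
    simp
  rw [hMd]
  apply inv_eq_right_inv
  have hdd : diagonal (fun i => (((hM.isHermitian.eigenvalues i + u : ℝ)) : ℂ)) *
      diagonal (fun i => (((hM.isHermitian.eigenvalues i + u)⁻¹ : ℝ) : ℂ)) = 1 := by
    rw [diagonal_mul_diagonal]
    rw [show (fun i => (((hM.isHermitian.eigenvalues i + u : ℝ)) : ℂ) *
        (((hM.isHermitian.eigenvalues i + u)⁻¹ : ℝ) : ℂ)) = fun _ => (1:ℂ) from ?_, diagonal_one]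
    funext i
    rw [← Complex.ofReal_mul, mul_inv_cancel₀ (hpos i).ne']
    simp
  calc U * diagonal (fun i => (((hM.isHermitian.eigenvalues i + u : ℝ)) : ℂ)) * star U *
        (U * diagonal (fun i => (((hM.isHermitian.eigenvalues i + u)⁻¹ : ℝ) : ℂ)) * star U)
      = U * diagonal (fun i => (((hM.isHermitian.eigenvalues i + u : ℝ)) : ℂ)) * (star U * U) *
        diagonal (fun i => (((hM.isHermitian.eigenvalues i + u)⁻¹ : ℝ) : ℂ)) * star U := by
        simp only [Matrix.mul_assoc]
    _ = 1 := by rw [hU2, Matrix.mul_one, Matrix.mul_assoc U, hdd, Matrix.mul_one, hU1]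


lemma pos_part {n : ℕ} {M : Matrix (Fin n) (Fin n) ℂ} (hM : M.PosDef) :
    @IntegrableOn ℝ (Matrix (Fin n) (Fin n) ℂ) _
        (NormedAddCommGroup.toMetricSpace.toUniformSpace.toTopologicalSpace) _
        (fun u : ℝ => (M + (u:ℂ) • 1)⁻¹ -
        ((1+u)⁻¹ : ℝ) • (1 : Matrix (Fin n) (Fin n) ℂ)) (Set.Ioi 0) volume ∧
      ∫ u in Set.Ioi (0:ℝ), ((M + (u:ℂ) • 1)⁻¹ -
        ((1+u)⁻¹ : ℝ) • (1 : Matrix (Fin n) (Fin n) ℂ)) = -(matLog M) := by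
  set U : Matrix (Fin n) (Fin n) ℂ :=
    (hM.isHermitian.eigenvectorUnitary : Matrix (Fin n) (Fin n) ℂ) with hU
  set lam : Fin n → ℝ := hM.isHermitian.eigenvalues with hlam
  set E : Fin n → Matrix (Fin n) (Fin n) ℂ :=
    fun i => U * diagonal (Pi.single i (1:ℂ)) * star U with hE
  have hU1 : U * star U = 1 := mem_unitaryGroup_iff.mp hM.isHermitian.eigenvectorUnitary.2
  have hsm : ∀ r : ℝ, (r : ℝ) • (1 : Matrix (Fin n) (Fin n) ℂ) =
      U * diagonal (fun _ => (r : ℂ)) * star U := by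
    intro r
    have h2 : (r:ℝ) • (1 : Matrix (Fin n) (Fin n) ℂ) = U * ((r:ℝ) • 1) * star U := by
      rw [mul_smul_comm, smul_mul_assoc, Matrix.mul_one, hU1]
    rw [h2]
    congr 1
    congr 1
    ext i j
    rcases eq_or_ne i j with rfl | h
    · simp [Matrix.diagonal_apply, Complex.real_smul]
    · simp [Matrix.diagonal_apply, Matrix.one_apply, h]
  have key : ∀ u ∈ Set.Ioi (0:ℝ), (M + (u:ℂ) • 1)⁻¹ - ((1+u)⁻¹ : ℝ) • 1 =
      ∑ i, ((lam i + u)⁻¹ - (1+u)⁻¹) • E i := by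
    intro u hu
    have hu0 : (0:ℝ) ≤ u := le_of_lt hu
    rw [hE, conj_diag_sum U (fun i => (lam i + u)⁻¹ - (1+u)⁻¹),
      resolvent_eq hM hu0, hsm ((1+u)⁻¹), ← Matrix.sub_mul, ← Matrix.mul_sub,
      diagonal_sub]
    congr 2
    funext i
    push_cast
    ring
  have hint : ∀ i : Fin n, @IntegrableOn ℝ (Matrix (Fin n) (Fin n) ℂ) _
        (NormedAddCommGroup.toMetricSpace.toUniformSpace.toTopologicalSpace) _
              (fun u : ℝ => ((lam i + u)⁻¹ - (1+u)⁻¹) • E i) (Set.Ioi 0) volume :=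
    fun i => (scalar_integrable (hM.eigenvalues_pos i) one_pos).smul_const (E i)
  have hintsum : @IntegrableOn ℝ (Matrix (Fin n) (Fin n) ℂ) _
        (NormedAddCommGroup.toMetricSpace.toUniformSpace.toTopologicalSpace) _
              (fun u : ℝ => ∑ i, ((lam i + u)⁻¹ - (1+u)⁻¹) • E i) (Set.Ioi 0) volume :=
    integrable_finset_sum _ (fun i _ => hint i)
  constructor
  · exact IntegrableOn.congr_fun hintsum (fun u hu => (key u hu).symm) measurableSet_Ioi
  · rw [setIntegral_congr_fun measurableSet_Ioi key,
      integral_finset_sum _ (fun i _ => hint i)]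
    simp_rw [integral_smul_const]
    have hval : ∀ i : Fin n,
        (∫ u in Set.Ioi (0:ℝ), ((lam i + u)⁻¹ - (1+u)⁻¹)) = -(Real.log (lam i)) := by
      intro i
      rw [scalar_integral (hM.eigenvalues_pos i) one_pos]
      simp [hlam]
    simp_rw [hval]
    rw [conj_diag_sum U (fun i => -(Real.log (lam i)))]
    rw [matLog, dif_pos hM.isHermitian]
    rw [← hU, ← hlam]
    rw [← Matrix.neg_mul, ← Matrix.mul_neg, diagonal_neg]
    congr 2
    funext i
    push_cast
    ring


/-- For positive definite `A`, `B` with `A+B` positive definite,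
`ln(A+B) − ln A = ∫₀^∞ ((A+uI)⁻¹ − (A+B+uI)⁻¹) du`, the improper matrix-valued
integral converging. -/
theorem stmt_15 {n : ℕ} (A B : Matrix (Fin n) (Fin n) ℂ) (hA : A.PosDef) (hB : B.PosDef)
    (hAB : (A + B).PosDef) :
    @IntegrableOn ℝ (Matrix (Fin n) (Fin n) ℂ) _
        (NormedAddCommGroup.toMetricSpace.toUniformSpace.toTopologicalSpace) _
        (fun u : ℝ => (A + (u : ℂ) • 1)⁻¹ - (A + B + (u : ℂ) • 1)⁻¹) (Set.Ioi 0) volume ∧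
      matLog (A + B) - matLog A =
        ∫ u in Set.Ioi (0 : ℝ), ((A + (u : ℂ) • 1)⁻¹ - (A + B + (u : ℂ) • 1)⁻¹) := by

  obtain ⟨hI1, hE1⟩ := pos_part hA
  obtain ⟨hI2, hE2⟩ := pos_part hAB
  have heq : ∀ u : ℝ, (A + (u:ℂ) • 1)⁻¹ - (A + B + (u:ℂ) • 1)⁻¹ =
      ((A + (u:ℂ) • 1)⁻¹ - ((1+u)⁻¹ : ℝ) • 1) -
        ((A + B + (u:ℂ) • 1)⁻¹ - ((1+u)⁻¹ : ℝ) • 1) :=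
    fun u => (sub_sub_sub_cancel_right _ _ _).symm
  constructor
  · exact IntegrableOn.congr_fun (hI1.sub hI2) (fun u _ => (heq u).symm) measurableSet_Ioi
  · rw [show (fun u : ℝ => (A + (u:ℂ) • 1)⁻¹ - (A + B + (u:ℂ) • 1)⁻¹) =
        fun u : ℝ => ((A + (u:ℂ) • 1)⁻¹ - ((1+u)⁻¹ : ℝ) • 1) -
          ((A + B + (u:ℂ) • 1)⁻¹ - ((1+u)⁻¹ : ℝ) • 1) from funext heq]
    rw [integral_sub hI1 hI2, hE1, hE2]
    abel
end
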